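/- Let F be a polybox in a d-box X. Then any two proper suits (partitions into pairwise dichotomous proper boxes) for F have the same cardinality, namely |Ĥ(F)| / 2^(|X_1|+...+|X_d|-2d), where Ĥ(F) is the set of tuples of odd subsets of the factors meeting F in a set of odd cardinality. -/

import Mathlib

open Finset

/-- The number of odd-cardinality subsets of a nonempty finset is `2^(n-1)`. -/
lemma aux_card_odd_powerset {α : Type*} [DecidableEq α] (s : Finset α) (hs : s.Nonempty) :
    (s.powerset.filter fun t => Odd t.card).card = 2 ^ (s.card - 1) := by
  obtain ⟨a, ha⟩ := hs
  have hbij : (s.powerset.filter fun t => Odd t.card).card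
      = (s.powerset.filter fun t => ¬ Odd t.card).card := by
    refine Finset.card_bij' (fun t _ => if a ∈ t then t.erase a else insert a t)
        (fun t _ => if a ∈ t then t.erase a else insert a t) ?hi ?hj ?li ?ri
    case hi =>
      intro t ht
      simp only [mem_filter, mem_powerset] at ht
      obtain ⟨hts, hodd⟩ := ht
      rw [Nat.odd_iff] at hodd
      by_cases h : a ∈ t
      · rw [if_pos h]
        simp only [mem_filter, mem_powerset, Nat.not_odd_iff_even]
        have h1 : 1 ≤ t.card := card_pos.2 ⟨a, h⟩
        refine ⟨(erase_subset _ _).trans hts, ?_⟩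
        rw [card_erase_of_mem h, Nat.even_iff]
        omega
      · rw [if_neg h]
        simp only [mem_filter, mem_powerset, Nat.not_odd_iff_even]
        refine ⟨insert_subset ha hts, ?_⟩
        rw [card_insert_of_notMem h, Nat.even_iff]
        omega
    case hj =>
      intro t ht
      simp only [mem_filter, mem_powerset, Nat.not_odd_iff_even] at ht
      obtain ⟨hts, heven⟩ := ht
      rw [Nat.even_iff] at heven
      by_cases h : a ∈ t
      · rw [if_pos h]
        simp only [mem_filter, mem_powerset]
        have h1 : 1 ≤ t.card := card_pos.2 ⟨a, h⟩
        refine ⟨(erase_subset _ _).trans hts, ?_⟩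
        rw [card_erase_of_mem h, Nat.odd_iff]
        omega
      · rw [if_neg h]
        simp only [mem_filter, mem_powerset]
        refine ⟨insert_subset ha hts, ?_⟩
        rw [card_insert_of_notMem h, Nat.odd_iff]
        omega
    case li =>
      intro t ht
      by_cases h : a ∈ t
      · simp [h, notMem_erase, insert_erase h]
      · simp [h, erase_insert h]
    case ri =>
      intro t ht
      by_cases h : a ∈ t
      · simp [h, notMem_erase, insert_erase h]
      · simp [h, erase_insert h]
  have hsplit : (s.powerset.filter fun t => Odd t.card).card
      + (s.powerset.filter fun t => ¬ Odd t.card).card = 2 ^ s.card := by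
    rw [Finset.card_filter_add_card_filter_not, card_powerset]
  have h1 : 1 ≤ s.card := card_pos.2 ⟨a, ha⟩
  have h2 : 2 ^ s.card = 2 * 2 ^ (s.card - 1) := by
    rw [← pow_succ']
    congr 1
    omega
  omega

lemma aux_card_even_powerset {α : Type*} [DecidableEq α] (s : Finset α) (hs : s.Nonempty) :
    (s.powerset.filter fun t => Even t.card).card = 2 ^ (s.card - 1) := by
  have hsplit : (s.powerset.filter fun t => Odd t.card).card
      + (s.powerset.filter fun t => ¬ Odd t.card).card = 2 ^ s.card := by
    rw [Finset.card_filter_add_card_filter_not, card_powerset]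
  have heq : (s.powerset.filter fun t => Even t.card)
      = (s.powerset.filter fun t => ¬ Odd t.card) := by
    apply filter_congr
    intro t _
    simp [Nat.not_odd_iff_even]
  obtain ⟨a, ha⟩ := hs
  have h1 : 1 ≤ s.card := card_pos.2 ⟨a, ha⟩
  have h2 : 2 ^ s.card = 2 * 2 ^ (s.card - 1) := by
    rw [← pow_succ']
    congr 1
    omega
  have := aux_card_odd_powerset s ⟨a, ha⟩
  rw [heq]
  omega

/-- Coordinate count: for a proper nonempty `A`, the number of odd subsets `S`
with `|A ∩ S|` odd is `2^(n-2)`. -/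
lemma aux_coord_count {α : Type*} [Fintype α] [DecidableEq α] (A : Finset α)
    (hA : A.Nonempty) (hA' : A ≠ Finset.univ) :
    (Finset.univ.filter fun S : Finset α => Odd S.card ∧ Odd ((A ∩ S)).card).card
      = 2 ^ (Fintype.card α - 2) := by
  have hAc : Aᶜ.Nonempty := by
    rw [← Finset.card_pos, Finset.card_compl]
    have := (Finset.card_lt_iff_ne_univ A).2 hA'
    omega
  have hsd : ∀ S : Finset α, S \ A = S ∩ Aᶜ := fun S => by
    ext x; simp
  have key : ∀ S : Finset α, (A ∩ S).card + (Aᶜ ∩ S).card = S.card := by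
    intro S
    rw [inter_comm A, inter_comm Aᶜ, ← hsd, card_inter_add_card_sdiff]
  have hbij : (Finset.univ.filter fun S : Finset α => Odd S.card ∧ Odd ((A ∩ S)).card).card
      = ((A.powerset.filter fun t => Odd t.card) ×ˢ
         (Aᶜ.powerset.filter fun t => Even t.card)).card := by
    refine Finset.card_bij' (fun S _ => (A ∩ S, Aᶜ ∩ S)) (fun p _ => p.1 ∪ p.2)
      ?hi ?hj ?li ?ri
    case hi =>
      intro S hS
      simp only [mem_filter, mem_univ, true_and] at hS
      simp only [mem_product, mem_filter, mem_powerset]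
      refine ⟨⟨inter_subset_left, hS.2⟩, inter_subset_left, ?_⟩
      have := key S
      have h1 := hS.1
      have h2 := hS.2
      rw [Nat.odd_iff] at h1 h2
      rw [Nat.even_iff]
      omega
    case hj =>
      intro p hp
      simp only [mem_product, mem_filter, mem_powerset] at hp
      obtain ⟨⟨hp1, hp1o⟩, hp2, hp2e⟩ := hp
      have hdisj : Disjoint p.1 p.2 :=
        Disjoint.mono hp1 hp2 disjoint_compl_right
      have hAp2 : A ∩ p.2 = ∅ :=
        Finset.disjoint_iff_inter_eq_empty.1 (Disjoint.mono_right hp2 disjoint_compl_right)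
      have hcap1 : A ∩ (p.1 ∪ p.2) = p.1 := by
        rw [inter_union_distrib_left, inter_eq_right.2 hp1, hAp2, union_empty]
      simp only [mem_filter, mem_univ, true_and]
      constructor
      · rw [card_union_of_disjoint hdisj]
        rw [Nat.odd_iff] at hp1o ⊢
        rw [Nat.even_iff] at hp2e
        omega
      · rw [hcap1]; exact hp1o
    case li =>
      intro S hS
      dsimp only
      rw [← union_inter_distrib_right, union_compl, univ_inter]
    case ri =>
      intro p hp
      obtain ⟨p1, p2⟩ := p
      dsimp only
      simp only [mem_product, mem_filter, mem_powerset] at hp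
      obtain ⟨⟨hp1, _⟩, hp2, _⟩ := hp
      have hAp2 : A ∩ p2 = ∅ :=
        Finset.disjoint_iff_inter_eq_empty.1 (Disjoint.mono_right hp2 disjoint_compl_right)
      have hAcp1 : Aᶜ ∩ p1 = ∅ :=
        Finset.disjoint_iff_inter_eq_empty.1 (Disjoint.mono_right hp1 disjoint_compl_left)
      have hcap1 : A ∩ (p1 ∪ p2) = p1 := by
        rw [inter_union_distrib_left, inter_eq_right.2 hp1, hAp2, union_empty]
      have hcap2 : Aᶜ ∩ (p1 ∪ p2) = p2 := by
        rw [inter_union_distrib_left, inter_eq_right.2 hp2, hAcp1, empty_union]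
      simp only [Prod.mk.injEq]
      exact ⟨hcap1, hcap2⟩
  rw [hbij, card_product, aux_card_odd_powerset A hA, aux_card_even_powerset Aᶜ hAc,
    ← pow_add]
  congr 1
  have h1 : 1 ≤ A.card := card_pos.2 hA
  have h2 : A.card < Fintype.card α := (Finset.card_lt_iff_ne_univ A).2 hA'
  rw [Finset.card_compl]
  omega

/-- Odd product of naturals iff all factors odd. -/
lemma aux_odd_prod {ι : Type*} (s : Finset ι) (f : ι → ℕ) :
    Odd (∏ i ∈ s, f i) ↔ ∀ i ∈ s, Odd (f i) := by
  rw [← Nat.not_even_iff_odd]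
  rw [even_iff_two_dvd, Nat.prime_two.prime.dvd_finset_prod_iff]
  push_neg
  simp only [← even_iff_two_dvd, Nat.not_even_iff_odd]

/-- Master counting lemma: any proper suit `𝓕` for `F` satisfies
`|Ĥ(F)| = |𝓕| · 2^(∑ nᵢ − 2d)`. -/
lemma aux_suit_card {d : ℕ} (X : Fin d → Type*) [∀ i, Fintype (X i)] [∀ i, DecidableEq (X i)]
    (hX : ∀ i, 2 ≤ Fintype.card (X i))
    (F : Finset (∀ i, X i))
    (𝓕 : Finset (∀ i, Finset (X i)))
    (h𝓕p : ∀ A ∈ 𝓕, ∀ i, (A i).Nonempty ∧ A i ≠ Finset.univ)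
    (h𝓕d : ∀ A ∈ 𝓕, ∀ B ∈ 𝓕, A ≠ B → ∃ i, A i = (B i)ᶜ)
    (h𝓕u : ∀ x, x ∈ F ↔ ∃ A ∈ 𝓕, ∀ i, x i ∈ A i) :
    (Finset.univ.filter (fun S : ∀ i, Finset (X i) =>
        (∀ i, Odd (S i).card) ∧
        Odd ((F ∩ Finset.univ.filter (fun x => ∀ i, x i ∈ S i)).card))).card
      = 𝓕.card * 2 ^ ((∑ i, Fintype.card (X i)) - 2 * d) := by
  classical
  set G : (∀ i, Finset (X i)) → Finset (∀ i, Finset (X i)) := fun A =>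
    Finset.univ.filter (fun S : ∀ i, Finset (X i) =>
      ∀ i, Odd (S i).card ∧ Odd ((A i ∩ S i)).card) with hG
  clear_value G
  -- pow arithmetic
  have hsum2d : ∑ i, (Fintype.card (X i) - 2) = (∑ i, Fintype.card (X i)) - 2 * d := by
    have h : ∑ i, (Fintype.card (X i) - 2) + 2 * d = ∑ i, Fintype.card (X i) := by
      have h2d : (2 * d : ℕ) = ∑ _i : Fin d, 2 := by
        simp [Finset.sum_const, Finset.card_univ, mul_comm]
      rw [h2d, ← Finset.sum_add_distrib]
      exact Finset.sum_congr rfl fun i _ => Nat.sub_add_cancel (hX i)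
    omega
  -- card of each G A
  have hGcard : ∀ A ∈ 𝓕, (G A).card = 2 ^ ((∑ i, Fintype.card (X i)) - 2 * d) := by
    intro A hA
    have hpi : G A = Fintype.piFinset (fun i =>
        Finset.univ.filter (fun T : Finset (X i) => Odd T.card ∧ Odd ((A i ∩ T)).card)) := by
      ext S
      simp only [hG, mem_filter, mem_univ, true_and, Fintype.mem_piFinset]
    rw [hpi, Fintype.card_piFinset]
    have : ∀ i, (Finset.univ.filter
        (fun T : Finset (X i) => Odd T.card ∧ Odd ((A i ∩ T)).card)).card
        = 2 ^ (Fintype.card (X i) - 2) := fun i =>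
      aux_coord_count (A i) (h𝓕p A hA i).1 (h𝓕p A hA i).2
    rw [Finset.prod_congr rfl fun i _ => this i, Finset.prod_pow_eq_pow_sum, hsum2d]
  -- key parity fact
  have hparity : ∀ S : ∀ i, Finset (X i), (∀ i, Odd (S i).card) →
      (Odd ((F ∩ Finset.univ.filter (fun x => ∀ i, x i ∈ S i)).card)
        ↔ ∃ A ∈ 𝓕, ∀ i, Odd ((A i ∩ S i)).card) := by
    intro S hSodd
    have hdecomp : F ∩ Finset.univ.filter (fun x => ∀ i, x i ∈ S i)
        = 𝓕.biUnion (fun A => Fintype.piFinset (fun i => A i ∩ S i)) := by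
      ext x
      simp only [mem_inter, mem_filter, mem_univ, true_and, mem_biUnion,
        Fintype.mem_piFinset, Finset.mem_inter, h𝓕u x]
      constructor
      · rintro ⟨⟨A, hA, hxA⟩, hxS⟩
        exact ⟨A, hA, fun i => ⟨hxA i, hxS i⟩⟩
      · rintro ⟨A, hA, h⟩
        exact ⟨⟨A, hA, fun i => (h i).1⟩, fun i => (h i).2⟩
    have hdisj : ∀ A ∈ 𝓕, ∀ B ∈ 𝓕, A ≠ B →
        Disjoint (Fintype.piFinset (fun i => A i ∩ S i))
          (Fintype.piFinset (fun i => B i ∩ S i)) := by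
      intro A hA B hB hAB
      obtain ⟨i, hi⟩ := h𝓕d A hA B hB hAB
      rw [Finset.disjoint_left]
      intro x hxA hxB
      rw [Fintype.mem_piFinset] at hxA hxB
      have h1 := Finset.mem_inter.1 (hxA i) |>.1
      have h2 := Finset.mem_inter.1 (hxB i) |>.1
      rw [hi, Finset.mem_compl] at h1
      exact h1 h2
    have hcard : (F ∩ Finset.univ.filter (fun x => ∀ i, x i ∈ S i)).card
        = ∑ A ∈ 𝓕, ∏ i, (A i ∩ S i).card := by
      rw [hdecomp, Finset.card_biUnion hdisj]
      exact Finset.sum_congr rfl fun A _ => Fintype.card_piFinset _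
    rw [hcard, Finset.odd_sum_iff_odd_card_odd]
    have hle1 : (𝓕.filter fun A => Odd (∏ i, (A i ∩ S i).card)).card ≤ 1 := by
      rw [Finset.card_le_one]
      intro A hA B hB
      simp only [mem_filter] at hA hB
      by_contra hAB
      obtain ⟨i, hi⟩ := h𝓕d A hA.1 B hB.1 hAB
      have hAodd := (aux_odd_prod _ _).1 hA.2 i (Finset.mem_univ i)
      have hBodd := (aux_odd_prod _ _).1 hB.2 i (Finset.mem_univ i)
      have hkey : (A i ∩ S i).card + (B i ∩ S i).card = (S i).card := by
        have hsd : S i \ B i = S i ∩ (B i)ᶜ := by ext x; simp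
        rw [hi, inter_comm (B i)ᶜ, ← hsd, inter_comm (B i),
          ← Finset.card_inter_add_card_sdiff (S i) (B i)]
        exact Nat.add_comm _ _
      have hS := hSodd i
      rw [Nat.odd_iff] at hAodd hBodd hS
      have hz : (S i).card % 2 = 0 := by
        rw [← hkey, Nat.add_mod, hAodd, hBodd]
      rw [hz] at hS
      exact Nat.zero_ne_one hS
    constructor
    · intro h
      have hpos : 0 < (𝓕.filter fun A => Odd (∏ i, (A i ∩ S i).card)).card := h.pos
      obtain ⟨A, hA⟩ := Finset.card_pos.1 hpos
      simp only [mem_filter] at hA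
      exact ⟨A, hA.1, fun i => (aux_odd_prod _ _).1 hA.2 i (Finset.mem_univ i)⟩
    · rintro ⟨A, hA, h⟩
      have hmem : A ∈ 𝓕.filter fun A => Odd (∏ i, (A i ∩ S i).card) := by
        simp only [mem_filter]
        exact ⟨hA, (aux_odd_prod _ _).2 fun i _ => h i⟩
      have hpos : 0 < (𝓕.filter fun A => Odd (∏ i, (A i ∩ S i).card)).card :=
        Finset.card_pos.2 ⟨A, hmem⟩
      have : (𝓕.filter fun A => Odd (∏ i, (A i ∩ S i).card)).card = 1 :=
        le_antisymm hle1 hpos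
      rw [this]; exact odd_one
  -- Ĥ(F) as disjoint union of G A
  have hHhat : (Finset.univ.filter (fun S : ∀ i, Finset (X i) =>
        (∀ i, Odd (S i).card) ∧
        Odd ((F ∩ Finset.univ.filter (fun x => ∀ i, x i ∈ S i)).card)))
      = 𝓕.biUnion G := by
    ext S
    simp only [mem_filter, mem_univ, true_and, mem_biUnion, hG]
    constructor
    · rintro ⟨hSodd, hodd⟩
      obtain ⟨A, hA, h⟩ := (hparity S hSodd).1 hodd
      exact ⟨A, hA, fun i => ⟨hSodd i, h i⟩⟩
    · rintro ⟨A, hA, h⟩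
      have hSodd : ∀ i, Odd (S i).card := fun i => (h i).1
      exact ⟨hSodd, (hparity S hSodd).2 ⟨A, hA, fun i => (h i).2⟩⟩
  rw [hHhat, Finset.card_biUnion]
  · exact Finset.sum_const_nat hGcard
  · intro A hA B hB hAB
    obtain ⟨i, hi⟩ := h𝓕d A hA B hB hAB
    rw [Function.onFun, Finset.disjoint_left]
    intro S hSA hSB
    simp only [hG, mem_filter, mem_univ, true_and] at hSA hSB
    have hAodd := (hSA i).2
    have hBodd := (hSB i).2
    have hS := (hSA i).1
    have hkey : (A i ∩ S i).card + (B i ∩ S i).card = (S i).card := by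
      have hsd : S i \ B i = S i ∩ (B i)ᶜ := by ext x; simp
      rw [hi, inter_comm (B i)ᶜ, ← hsd, inter_comm (B i),
        ← Finset.card_inter_add_card_sdiff (S i) (B i)]
      exact Nat.add_comm _ _
    rw [Nat.odd_iff] at hAodd hBodd hS
    omega

/-- any two proper suits for a polybox `F` have the same cardinality,
namely `|Ĥ(F)| / 2^(|X₁|+⋯+|X_d|−2d)`. -/
theorem stmt_5 {d : ℕ} (X : Fin d → Type*) [∀ i, Fintype (X i)] [∀ i, DecidableEq (X i)]
    (hX : ∀ i, 2 ≤ Fintype.card (X i))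
    (F : Finset (∀ i, X i)) (hFne : F.Nonempty)
    (𝓕 𝓖 : Finset (∀ i, Finset (X i)))
    (h𝓕p : ∀ A ∈ 𝓕, ∀ i, (A i).Nonempty ∧ A i ≠ Finset.univ)
    (h𝓖p : ∀ A ∈ 𝓖, ∀ i, (A i).Nonempty ∧ A i ≠ Finset.univ)
    (h𝓕d : ∀ A ∈ 𝓕, ∀ B ∈ 𝓕, A ≠ B → ∃ i, A i = (B i)ᶜ)
    (h𝓖d : ∀ A ∈ 𝓖, ∀ B ∈ 𝓖, A ≠ B → ∃ i, A i = (B i)ᶜ)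
    (h𝓕u : ∀ x, x ∈ F ↔ ∃ A ∈ 𝓕, ∀ i, x i ∈ A i)
    (h𝓖u : ∀ x, x ∈ F ↔ ∃ A ∈ 𝓖, ∀ i, x i ∈ A i) :
    𝓕.card = 𝓖.card ∧
    𝓕.card = (Finset.univ.filter (fun A : ∀ i, Finset (X i) =>
        (∀ i, Odd (A i).card) ∧
        Odd ((F ∩ Finset.univ.filter (fun x => ∀ i, x i ∈ A i)).card))).card
      / 2 ^ ((∑ i, Fintype.card (X i)) - 2 * d) := by
  have h𝓕 := aux_suit_card X hX F 𝓕 h𝓕p h𝓕d h𝓕u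
  have h𝓖 := aux_suit_card X hX F 𝓖 h𝓖p h𝓖d h𝓖u
  have hK : 0 < 2 ^ ((∑ i, Fintype.card (X i)) - 2 * d) := Nat.pow_pos (by norm_num)
  constructor
  · exact Nat.eq_of_mul_eq_mul_right hK (h𝓕 ▸ h𝓖)
  · rw [h𝓕, Nat.mul_div_cancel 𝓕.card hK]
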